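/- Let n ≥ 1 and let 𝒮 be a set of Seidel matrices of order n containing exactly one representative of every equivalence class of Seidel matrices of order n. Then Σ_{S ∈ 𝒮} 1/|Aut(S)| = 2^{n(n−3)/2} / n!. -/

import Mathlib

open Polynomial Matrix

/-- A Seidel matrix: a real symmetric matrix with zero diagonal and all off-diagonal
entries equal to `±1`. -/
def IsSeidel {m : Type*} (S : Matrix m m ℝ) : Prop :=
  S.IsSymm ∧ (∀ i, S i i = 0) ∧ ∀ i j, i ≠ j → S i j = 1 ∨ S i j = -1

/-- A signed permutation matrix: exactly one nonzero entry, equal to `±1`, in each row and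
in each column. -/
def IsSignedPerm {m : Type*} [Fintype m] [DecidableEq m] (P : Matrix m m ℝ) : Prop :=
  ∃ (σ : Equiv.Perm m) (ε : m → ℝ), (∀ i, ε i = 1 ∨ ε i = -1) ∧
    ∀ i j, P i j = if i = σ j then ε j else 0

/-- Equivalence of Seidel matrices: `S₂ = P S₁ Pᵀ` for some signed permutation matrix `P`. -/
def SeidelEquiv {m : Type*} [Fintype m] [DecidableEq m] (S₁ S₂ : Matrix m m ℝ) : Prop :=
  ∃ P : Matrix m m ℝ, IsSignedPerm P ∧ S₂ = P * S₁ * Pᵀ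

namespace Stmt18
open scoped Classical
variable {n : ℕ}

noncomputable def sgn (b : Bool) : ℝ := if b then 1 else -1

lemma sgn_pm (b : Bool) : sgn b = 1 ∨ sgn b = -1 := by cases b <;> simp [sgn]

lemma sgn_mul_sgn (a b : Bool) : sgn a * sgn b = sgn (a == b) := by
  cases a <;> cases b <;> norm_num [sgn]

lemma sgn_self (a : Bool) : sgn a * sgn a = 1 := by cases a <;> norm_num [sgn]

noncomputable def spm (σ : Equiv.Perm (Fin n)) (ε : Fin n → Bool) :
    Matrix (Fin n) (Fin n) ℝ :=
  Matrix.of fun i j => if i = σ j then sgn (ε j) else 0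

lemma spm_apply (σ : Equiv.Perm (Fin n)) (ε : Fin n → Bool) (i j : Fin n) :
    spm σ ε i j = if i = σ j then sgn (ε j) else 0 := rfl

lemma isSignedPerm_iff {P : Matrix (Fin n) (Fin n) ℝ} :
    IsSignedPerm P ↔ ∃ σ ε, P = spm σ ε := by
  constructor
  · rintro ⟨σ, ε, hε, hP⟩
    refine ⟨σ, fun j => decide (ε j = 1), ?_⟩
    ext i j
    rw [hP i j, spm_apply]
    rcases hε j with h | h <;> simp [h, sgn] <;> norm_num
  · rintro ⟨σ, ε, rfl⟩
    exact ⟨σ, fun j => sgn (ε j), fun i => sgn_pm _, fun i j => rfl⟩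

lemma sgn_inj {a b : Bool} (h : sgn a = sgn b) : a = b := by
  revert h
  cases a <;> cases b <;> norm_num [sgn]

lemma spm_injective :
    Function.Injective (fun p : Equiv.Perm (Fin n) × (Fin n → Bool) => spm p.1 p.2) := by
  rintro ⟨σ, ε⟩ ⟨τ, δ⟩ h
  simp only at h
  have key : ∀ j, σ j = τ j ∧ ε j = δ j := by
    intro j
    have := congrFun (congrFun h (σ j)) j
    simp only [spm_apply, if_pos rfl] at this
    by_cases hc : σ j = τ j
    · refine ⟨hc, ?_⟩
      rw [if_pos hc] at this
      exact sgn_inj this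
    · rw [if_neg hc] at this
      rcases sgn_pm (ε j) with h' | h' <;> rw [h'] at this <;> norm_num at this
  refine Prod.ext ?_ ?_
  · exact Equiv.ext fun j => (key j).1
  · exact funext fun j => (key j).2

lemma spm_transpose (σ : Equiv.Perm (Fin n)) (ε : Fin n → Bool) :
    (spm σ ε)ᵀ = spm σ⁻¹ (fun j => ε (σ⁻¹ j)) := by
  ext i j
  simp only [transpose_apply, spm_apply]
  by_cases h : j = σ i
  · rw [if_pos h, if_pos (by simp [h]), h]
    simp
  · rw [if_neg h, if_neg (by
      intro hc
      apply h
      rw [hc]; simp [Equiv.Perm.inv_def])]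

lemma spm_mul_spm (σ τ : Equiv.Perm (Fin n)) (ε δ : Fin n → Bool) :
    spm σ ε * spm τ δ = spm (σ * τ) (fun j => ε (τ j) == δ j) := by
  ext i j
  rw [mul_apply]
  simp only [spm_apply]
  rw [Finset.sum_eq_single (τ j)]
  · simp only [Equiv.Perm.mul_apply, if_pos rfl, ← sgn_mul_sgn]
    by_cases h : i = σ (τ j) <;> simp [h]
  · intro k _ hk
    simp [hk]
  · simp

lemma spm_one : (spm (1 : Equiv.Perm (Fin n)) fun _ => true) = 1 := by
  ext i j
  simp [spm_apply, sgn, Matrix.one_apply, eq_comm]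

lemma spm_mul_transpose_self (σ : Equiv.Perm (Fin n)) (ε : Fin n → Bool) :
    spm σ ε * (spm σ ε)ᵀ = 1 := by
  rw [spm_transpose, spm_mul_spm]
  simp [spm_one]

lemma spm_transpose_mul_self (σ : Equiv.Perm (Fin n)) (ε : Fin n → Bool) :
    (spm σ ε)ᵀ * spm σ ε = 1 := by
  rw [spm_transpose, spm_mul_spm]
  simp [spm_one]

lemma conj_apply (σ : Equiv.Perm (Fin n)) (ε : Fin n → Bool)
    (S : Matrix (Fin n) (Fin n) ℝ) (i j : Fin n) :
    (spm σ ε * S * (spm σ ε)ᵀ) i j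
      = sgn (ε (σ⁻¹ i)) * sgn (ε (σ⁻¹ j)) * S (σ⁻¹ i) (σ⁻¹ j) := by
  rw [mul_apply]
  rw [Finset.sum_eq_single (σ⁻¹ j)]
  · rw [mul_apply, Finset.sum_eq_single (σ⁻¹ i)]
    · simp only [transpose_apply, spm_apply]
      rw [if_pos (by simp), if_pos (by simp)]
      ring
    · intro k _ hk
      rw [spm_apply, if_neg (fun hc => hk (by rw [hc]; simp)), zero_mul]
    · simp
  · intro k _ hk
    rw [transpose_apply, spm_apply, if_neg (fun hc => hk (by rw [hc]; simp)), mul_zero]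
  · simp


lemma isSignedPerm_one : IsSignedPerm (1 : Matrix (Fin n) (Fin n) ℝ) :=
  isSignedPerm_iff.2 ⟨1, fun _ => true, spm_one.symm⟩

-- new material
lemma sp_transpose {P : Matrix (Fin n) (Fin n) ℝ} (h : IsSignedPerm P) :
    IsSignedPerm Pᵀ := by
  rw [isSignedPerm_iff] at h ⊢
  obtain ⟨σ, ε, rfl⟩ := h
  exact ⟨_, _, spm_transpose σ ε⟩

lemma sp_mul {P Q : Matrix (Fin n) (Fin n) ℝ}
    (hP : IsSignedPerm P) (hQ : IsSignedPerm Q) : IsSignedPerm (P * Q) := by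
  rw [isSignedPerm_iff] at hP hQ ⊢
  obtain ⟨σ, ε, rfl⟩ := hP; obtain ⟨τ, δ, rfl⟩ := hQ
  exact ⟨_, _, spm_mul_spm σ τ ε δ⟩

lemma sp_mul_transpose {P : Matrix (Fin n) (Fin n) ℝ} (h : IsSignedPerm P) :
    P * Pᵀ = 1 := by
  rw [isSignedPerm_iff] at h; obtain ⟨σ, ε, rfl⟩ := h; exact spm_mul_transpose_self σ ε

lemma sp_transpose_mul {P : Matrix (Fin n) (Fin n) ℝ} (h : IsSignedPerm P) :
    Pᵀ * P = 1 := by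
  rw [isSignedPerm_iff] at h; obtain ⟨σ, ε, rfl⟩ := h; exact spm_transpose_mul_self σ ε

lemma seidel_conj {S : Matrix (Fin n) (Fin n) ℝ} (hS : IsSeidel S)
    {P : Matrix (Fin n) (Fin n) ℝ} (hP : IsSignedPerm P) : IsSeidel (P * S * Pᵀ) := by
  obtain ⟨hsymm, hdiag, hoff⟩ := hS
  rw [isSignedPerm_iff] at hP; obtain ⟨σ, ε, rfl⟩ := hP
  refine ⟨?_, ?_, ?_⟩
  · ext i j
    rw [Matrix.IsSymm] at hsymm
    simp only [transpose_apply, conj_apply]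
    rw [show S (σ⁻¹ j) (σ⁻¹ i) = S (σ⁻¹ i) (σ⁻¹ j) from by
      conv_lhs => rw [← hsymm]
      rfl]
    ring
  · intro i
    rw [conj_apply, hdiag, mul_zero]
  · intro i j hij
    rw [conj_apply]
    have h1 : (σ⁻¹ : Equiv.Perm (Fin n)) i ≠ σ⁻¹ j := fun hc => hij (by
      simpa using congrArg σ hc)
    rcases hoff _ _ h1 with h | h <;> rw [h] <;>
      rcases sgn_pm (ε (σ⁻¹ i)) with h2 | h2 <;> rw [h2] <;>
      rcases sgn_pm (ε (σ⁻¹ j)) with h3 | h3 <;> rw [h3] <;> norm_num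

lemma seidelEquiv_symm {S T : Matrix (Fin n) (Fin n) ℝ} (h : SeidelEquiv S T) :
    SeidelEquiv T S := by
  obtain ⟨P, hP, rfl⟩ := h
  refine ⟨Pᵀ, sp_transpose hP, ?_⟩
  rw [transpose_transpose]
  calc S = (Pᵀ * P) * S * (Pᵀ * P) := by rw [sp_transpose_mul hP]; simp
    _ = Pᵀ * (P * S * Pᵀ) * P := by noncomm_ring

----------------------------------------------------------------
-- The finset of signed permutation matrices
noncomputable def G (n : ℕ) : Finset (Matrix (Fin n) (Fin n) ℝ) :=
  Finset.image (fun p : Equiv.Perm (Fin n) × (Fin n → Bool) => spm p.1 p.2) Finset.univ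

lemma mem_G {P : Matrix (Fin n) (Fin n) ℝ} : P ∈ G n ↔ IsSignedPerm P := by
  simp [G, isSignedPerm_iff, eq_comm]

lemma card_G : (G n).card = n.factorial * 2 ^ n := by
  rw [G, Finset.card_image_of_injective _ spm_injective, Finset.card_univ]
  simp [Fintype.card_perm]

-- the index type for strictly upper triangular entries
abbrev UT (n : ℕ) := {p : Fin n × Fin n // p.1 < p.2}

noncomputable def seid (f : UT n → Bool) : Matrix (Fin n) (Fin n) ℝ :=
  Matrix.of fun i j =>
    if h : i < j then sgn (f ⟨(i, j), h⟩)
    else if h' : j < i then sgn (f ⟨(j, i), h'⟩) else 0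

lemma seid_injective : Function.Injective (seid (n := n)) := by
  intro f g h
  funext p
  obtain ⟨⟨i, j⟩, hij⟩ := p
  have := congrFun (congrFun h i) j
  simp only [seid, Matrix.of_apply, dif_pos hij] at this
  exact sgn_inj this

lemma isSeidel_seid (f : UT n → Bool) : IsSeidel (seid f) := by
  refine ⟨?_, ?_, ?_⟩
  · ext i j
    simp only [transpose_apply, seid, Matrix.of_apply]
    rcases lt_trichotomy i j with h | h | h
    · rw [dif_neg (not_lt.2 h.le), dif_pos h, dif_pos h]
    · subst h; simp
    · rw [dif_pos h, dif_neg (not_lt.2 h.le), dif_pos h]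
  · intro i; simp [seid]
  · intro i j hij
    simp only [seid, Matrix.of_apply]
    rcases lt_trichotomy i j with h | h | h
    · rw [dif_pos h]; exact sgn_pm _
    · exact absurd h hij
    · rw [dif_neg (not_lt.2 h.le), dif_pos h]; exact sgn_pm _

lemma isSeidel_iff {S : Matrix (Fin n) (Fin n) ℝ} :
    IsSeidel S ↔ ∃ f : UT n → Bool, S = seid f := by
  constructor
  · rintro ⟨hsymm, hdiag, hoff⟩
    refine ⟨fun p => decide (S p.1.1 p.1.2 = 1), ?_⟩
    funext i j
    simp only [seid, Matrix.of_apply]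
    rcases lt_trichotomy i j with h | h | h
    · rw [dif_pos h]
      rcases hoff i j h.ne with h1 | h1 <;> simp [h1, sgn] <;> norm_num
    · subst h; simp [hdiag i]
    · rw [dif_neg (not_lt.2 h.le), dif_pos h]
      have hsij : S i j = S j i := hsymm.apply j i
      rcases hoff j i h.ne with h1 | h1 <;> rw [hsij] <;> simp [h1, sgn] <;> norm_num
  · rintro ⟨f, rfl⟩; exact isSeidel_seid f

noncomputable def X (n : ℕ) : Finset (Matrix (Fin n) (Fin n) ℝ) :=
  Finset.image seid Finset.univ

lemma mem_X {S : Matrix (Fin n) (Fin n) ℝ} : S ∈ X n ↔ IsSeidel S := by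
  simp [X, isSeidel_iff, eq_comm]

lemma card_X : (X n).card = 2 ^ (Fintype.card (UT n)) := by
  rw [X, Finset.card_image_of_injective _ seid_injective, Finset.card_univ]
  simp

lemma card_UT : 2 * Fintype.card (UT n) = n * (n - 1) := by
  classical
  have hA : Fintype.card (UT n)
      = (Finset.univ.filter fun p : Fin n × Fin n => p.1 < p.2).card :=
    Fintype.card_subtype _
  set A := Finset.univ.filter fun p : Fin n × Fin n => p.1 < p.2 with hAdef
  set B := Finset.univ.filter fun p : Fin n × Fin n => p.2 < p.1 with hBdef
  have hBA : B = A.image Prod.swap := by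
    ext ⟨a, b⟩
    simp [hAdef, hBdef, Prod.ext_iff]
  have hcardAB : A.card = B.card := by
    rw [hBA, Finset.card_image_of_injective _ Prod.swap_injective]
  have hdisj : Disjoint A B := by
    rw [Finset.disjoint_left]
    intro p hp hq
    simp [hAdef, hBdef] at hp hq
    exact absurd hq (lt_asymm hp)
  have hunion : A ∪ B = (Finset.univ : Finset (Fin n)).offDiag := by
    ext p
    simp only [Finset.mem_union, Finset.mem_offDiag, hAdef, hBdef, Finset.mem_filter,
      Finset.mem_univ, true_and]
    constructor
    · rintro (h | h)
      · exact fun hc => absurd hc h.ne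
      · exact fun hc => absurd hc h.ne'
    · intro h
      rcases lt_trichotomy p.1 p.2 with h' | h' | h'
      · exact Or.inl h'
      · exact absurd h' h
      · exact Or.inr h'
  have hcard : 2 * A.card = n * n - n := by
    rw [two_mul]
    nth_rewrite 2 [hcardAB]
    rw [← Finset.card_union_of_disjoint hdisj, hunion, Finset.offDiag_card,
      Finset.card_univ, Fintype.card_fin]
  rw [hA, hcard]
  cases n with
  | zero => simp
  | succ m =>
    simp only [Nat.succ_sub_one]
    have : (m + 1) * (m + 1) = (m + 1) * m + (m + 1) := by ring
    omega

lemma orbit_stab {T : Matrix (Fin n) (Fin n) ℝ} (hT : IsSeidel T) :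
    ((X n).filter (fun S => SeidelEquiv S T)).card *
      ((G n).filter (fun P => P * T * Pᵀ = T)).card = (G n).card := by
  classical
  have hmap : ∀ Q ∈ G n, Q * T * Qᵀ ∈ (X n).filter (fun S => SeidelEquiv S T) := by
    intro Q hQ
    rw [Finset.mem_filter]
    refine ⟨mem_X.2 (seidel_conj hT (mem_G.1 hQ)), ⟨Qᵀ, sp_transpose (mem_G.1 hQ), ?_⟩⟩
    rw [transpose_transpose]
    calc T = (Qᵀ * Q) * T * (Qᵀ * Q) := by rw [sp_transpose_mul (mem_G.1 hQ)]; simp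
      _ = Qᵀ * (Q * T * Qᵀ) * Q := by noncomm_ring
  have hfib := Finset.card_eq_sum_card_fiberwise hmap
  have hfibcard : ∀ S ∈ (X n).filter (fun S => SeidelEquiv S T),
      ((G n).filter (fun Q => Q * T * Qᵀ = S)).card
        = ((G n).filter (fun P => P * T * Pᵀ = T)).card := by
    intro S hS
    rw [Finset.mem_filter] at hS
    obtain ⟨hSX, P, hP, hPS⟩ := hS
    have hPG : P ∈ G n := mem_G.2 hP
    have hback : Pᵀ * T * P = S := by
      rw [hPS]
      calc Pᵀ * (P * S * Pᵀ) * P = (Pᵀ * P) * S * (Pᵀ * P) := by noncomm_ring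
        _ = S := by rw [sp_transpose_mul hP]; simp
    apply Finset.card_bij' (fun Q _ => P * Q) (fun R _ => Pᵀ * R)
    · intro Q hQ
      calc Pᵀ * (P * Q) = (Pᵀ * P) * Q := by noncomm_ring
        _ = Q := by rw [sp_transpose_mul hP]; simp
    · intro R hR
      calc P * (Pᵀ * R) = (P * Pᵀ) * R := by noncomm_ring
        _ = R := by rw [sp_mul_transpose hP]; simp
    · intro Q hQ
      rw [Finset.mem_filter] at hQ ⊢
      refine ⟨mem_G.2 (sp_mul hP (mem_G.1 hQ.1)), ?_⟩
      calc (P * Q) * T * (P * Q)ᵀ = P * (Q * T * Qᵀ) * Pᵀ := by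
            rw [transpose_mul]; noncomm_ring
        _ = P * S * Pᵀ := by rw [hQ.2]
        _ = T := hPS.symm
    · intro R hR
      rw [Finset.mem_filter] at hR ⊢
      refine ⟨mem_G.2 (sp_mul (sp_transpose hP) (mem_G.1 hR.1)), ?_⟩
      calc (Pᵀ * R) * T * (Pᵀ * R)ᵀ = Pᵀ * (R * T * Rᵀ) * Pᵀᵀ := by
            rw [transpose_mul, transpose_transpose]; noncomm_ring
        _ = Pᵀ * T * P := by rw [hR.2, transpose_transpose]
        _ = S := hback
  rw [Finset.sum_congr rfl hfibcard, Finset.sum_const, smul_eq_mul] at hfib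
  exact hfib.symm


end Stmt18

open Stmt18 in
theorem stmt_18 (n : ℕ) (hn : 1 ≤ n) (𝒮 : Finset (Matrix (Fin n) (Fin n) ℝ))
    (hSeidel : ∀ S ∈ 𝒮, IsSeidel S)
    (hrep : ∀ S : Matrix (Fin n) (Fin n) ℝ, IsSeidel S →
      ∃! T, T ∈ 𝒮 ∧ SeidelEquiv S T) :
    ∑ S ∈ 𝒮, (1 : ℝ) /
        (Nat.card {P : Matrix (Fin n) (Fin n) ℝ // IsSignedPerm P ∧ P * S * Pᵀ = S}) =
      (2 : ℝ) ^ (((n : ℤ) * ((n : ℤ) - 3)) / 2) / (n.factorial : ℝ) := by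
  classical
  -- notation
  set orb : Matrix (Fin n) (Fin n) ℝ → ℕ :=
    fun T => ((X n).filter (fun S => SeidelEquiv S T)).card with horb
  set stab : Matrix (Fin n) (Fin n) ℝ → ℕ :=
    fun T => ((G n).filter (fun P => P * T * Pᵀ = T)).card with hstab
  -- Nat.card of the subtype equals stab
  have hnatcard : ∀ T : Matrix (Fin n) (Fin n) ℝ,
      Nat.card {P : Matrix (Fin n) (Fin n) ℝ // IsSignedPerm P ∧ P * T * Pᵀ = T}
        = stab T := by
    intro T
    have e : {P : Matrix (Fin n) (Fin n) ℝ // IsSignedPerm P ∧ P * T * Pᵀ = T}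
        ≃ {P // P ∈ (G n).filter (fun P => P * T * Pᵀ = T)} :=
      Equiv.subtypeEquivRight (by intro P; simp [Finset.mem_filter, mem_G])
    rw [Nat.card_congr e, Nat.card_eq_fintype_card, Fintype.card_coe]
  -- the partition of X into orbits
  have hpart : ∑ T ∈ 𝒮, orb T = (X n).card := by
    have hmap : ∀ S ∈ X n,
        (if h : IsSeidel S then (hrep S h).choose else 0) ∈ 𝒮 := by
      intro S hS
      rw [dif_pos (mem_X.1 hS)]
      exact ((hrep S (mem_X.1 hS)).choose_spec).1.1
    rw [Finset.card_eq_sum_card_fiberwise hmap]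
    refine Finset.sum_congr rfl fun T hT => ?_
    simp only [horb]
    congr 1
    apply Finset.filter_congr
    intro S hS
    have hSseid := mem_X.1 hS
    rw [dif_pos hSseid]
    constructor
    · intro hequiv
      exact (((hrep S hSseid).choose_spec).2 T ⟨hT, hequiv⟩).symm
    · rintro rfl
      exact ((hrep S hSseid).choose_spec).1.2
  -- positivity facts
  have hGpos : 0 < (G n).card :=
    Finset.card_pos.2 ⟨1, mem_G.2 isSignedPerm_one⟩
  -- per-term rewriting
  have hterm : ∀ T ∈ 𝒮, (1 : ℝ) / (stab T) = (orb T : ℝ) / ((G n).card : ℝ) := by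
    intro T hT
    have hos : orb T * stab T = (G n).card := orbit_stab (hSeidel T hT)
    have hstabpos : 0 < stab T :=
      Nat.pos_of_ne_zero fun h => by rw [h, mul_zero] at hos; omega
    have hcast : (orb T : ℝ) * (stab T : ℝ) = ((G n).card : ℝ) := by exact_mod_cast hos
    rw [div_eq_div_iff (by exact_mod_cast hstabpos.ne') (by exact_mod_cast hGpos.ne'),
      one_mul, ← hcast]
  -- assemble
  have hsum : ∑ S ∈ 𝒮, (1 : ℝ) /
      (Nat.card {P : Matrix (Fin n) (Fin n) ℝ // IsSignedPerm P ∧ P * S * Pᵀ = S})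
      = ((X n).card : ℝ) / ((G n).card : ℝ) := by
    rw [show ((X n).card : ℝ) = ((∑ T ∈ 𝒮, orb T : ℕ) : ℝ) by rw [hpart]]
    rw [Nat.cast_sum, Finset.sum_div]
    refine Finset.sum_congr rfl fun T hT => ?_
    rw [hnatcard T]
    exact hterm T hT
  rw [hsum, card_X, card_G]
  -- arithmetic
  set k := Fintype.card (UT n) with hk
  have h2k : (2 * k : ℤ) = (n : ℤ) * ((n : ℤ) - 1) := by
    have h := card_UT (n := n)
    have : ((2 * k : ℕ) : ℤ) = ((n * (n - 1) : ℕ) : ℤ) := by exact_mod_cast h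
    push_cast [Nat.cast_sub hn] at this
    exact_mod_cast this
  have he : ((n : ℤ) * ((n : ℤ) - 3)) / 2 = (k : ℤ) - (n : ℤ) := by
    have h3 : (n : ℤ) * ((n : ℤ) - 3) = 2 * ((k : ℤ) - (n : ℤ)) := by
      have : (n : ℤ) * ((n : ℤ) - 3) = (n : ℤ) * ((n : ℤ) - 1) - 2 * n := by ring
      rw [this, ← h2k]; ring
    rw [h3, Int.mul_ediv_cancel_left _ (by norm_num)]
  rw [he, zpow_sub₀ (by norm_num : (2:ℝ) ≠ 0), zpow_natCast, zpow_natCast]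
  have hfac : (n.factorial : ℝ) ≠ 0 := by exact_mod_cast n.factorial_ne_zero
  have h2n : ((2:ℝ)) ^ n ≠ 0 := by positivity
  field_simp
  push_cast
  ring
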